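/- Let X = (X₁, X₂) ∈ {0,1}² with P(0,0) = P(0,1) = P(1,0) = 1/3 and P(1,1) = 0, and bandwidth k = 1. The deviation heuristic σ^dev reveals, at each instance, one coordinate maximizing |x_i − 1/3| (breaking ties by the smaller index); the greedy information-gain policy σ^greedy reveals the loss-minimizing choice among ∅ and singletons at each instance (choosing ∅ at (0,0) and the coordinate equal to 1 at (0,1) and (1,0)). Their expected naive losses satisfy R^N(σ^dev) = 1/12 and R^N(σ^greedy) = 2/27, and hence R^N(σ^greedy) = 2/27 < 1/12 = R^N(σ^dev). -/

import Mathlib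

/-!
Statement 19: For the correlated prior `P(0,0)=P(0,1)=P(1,0)=1/3`, `P(1,1)=0`
and bandwidth `k = 1`, the deviation heuristic has expected naive loss `1/12`,
the greedy information-gain policy has expected naive loss `2/27`, and
`2/27 < 1/12`.
-/

open Finset
open scoped Classical

noncomputable section

/-- The support of the prior: the three equally likely states. -/
def supp19 : Finset (ℝ × ℝ) := {(0, 0), (0, 1), (1, 0)}

/-- Coordinates of an instance. -/
def coord19 (j : Fin 2) (x : ℝ × ℝ) : ℝ := if j = 0 then x.1 else x.2

/-- Naive conditional mean `E[X_j | X_I = x_I]` under the uniform prior on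
`supp19` (the unconditional mean when `I = ∅`). -/
def condMean19 (I : Finset (Fin 2)) (x : ℝ × ℝ) (j : Fin 2) : ℝ :=
  (∑ y ∈ supp19.filter (fun y => ∀ i ∈ I, coord19 i y = coord19 i x),
      coord19 j y) /
    ((supp19.filter (fun y => ∀ i ∈ I, coord19 i y = coord19 i x)).card : ℝ)

/-- Naive realized loss `L^N(I;x) = Σ_{i∉I}(x_i − E[X_i | X_I = x_I])²`. -/
def LN19 (I : Finset (Fin 2)) (x : ℝ × ℝ) : ℝ :=
  ∑ j ∈ Iᶜ, (coord19 j x - condMean19 I x j) ^ 2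

/-- Expected naive loss of a policy under the uniform prior on the three
support points. -/
def RN19 (pol : ℝ × ℝ → Finset (Fin 2)) : ℝ :=
  (1 / 3) * ∑ x ∈ supp19, LN19 (pol x) x

/-- Deviation heuristic: reveal one coordinate maximizing `|x_i − 1/3|`,
breaking ties in favor of the smaller index. -/
def devPol19 (x : ℝ × ℝ) : Finset (Fin 2) :=
  if |x.2 - 1 / 3| > |x.1 - 1 / 3| then {1} else {0}

/-- Greedy information-gain policy: reveal the loss-minimizing choice among
`∅` and the singletons (`∅` at `(0,0)`, the coordinate equal to `1` at
`(0,1)` and `(1,0)`). -/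
def greedyPol19 (x : ℝ × ℝ) : Finset (Fin 2) :=
  if x = ((0 : ℝ), (0 : ℝ)) then ∅ else if x.1 = 1 then {0} else {1}

lemma compl0 : ({0} : Finset (Fin 2))ᶜ = {1} := by decide
lemma compl1 : ({1} : Finset (Fin 2))ᶜ = {0} := by decide
lemma complE : (∅ : Finset (Fin 2))ᶜ = {0, 1} := by decide

lemma filt0 (x : ℝ × ℝ) :
    supp19.filter (fun y => ∀ i ∈ ({0} : Finset (Fin 2)), coord19 i y = coord19 i x)
      = supp19.filter (fun y => y.1 = x.1) := by
  apply Finset.filter_congr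
  intro y _
  simp [coord19]

lemma filt1 (x : ℝ × ℝ) :
    supp19.filter (fun y => ∀ i ∈ ({1} : Finset (Fin 2)), coord19 i y = coord19 i x)
      = supp19.filter (fun y => y.2 = x.2) := by
  apply Finset.filter_congr
  intro y _
  simp [coord19]

lemma filtE (x : ℝ × ℝ) :
    supp19.filter (fun y => ∀ i ∈ (∅ : Finset (Fin 2)), coord19 i y = coord19 i x)
      = supp19 := by
  simp

lemma supp_ne : ((0:ℝ),(0:ℝ)) ≠ ((0:ℝ),(1:ℝ)) ∧ ((0:ℝ),(0:ℝ)) ≠ ((1:ℝ),(0:ℝ)) ∧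
    ((0:ℝ),(1:ℝ)) ≠ ((1:ℝ),(0:ℝ)) := by
  norm_num [Prod.ext_iff]

lemma LN_00_0 : LN19 {0} ((0:ℝ),(0:ℝ)) = 1/4 := by
  have h : supp19.filter (fun y => y.1 = (0:ℝ)) = {((0:ℝ),(0:ℝ)), ((0:ℝ),(1:ℝ))} := by
    rw [supp19]
    rw [Finset.filter_insert, Finset.filter_insert, Finset.filter_singleton]
    norm_num
  rw [LN19, compl0]
  rw [Finset.sum_singleton, condMean19, filt0]
  simp only [h]
  rw [Finset.sum_insert (by norm_num [Prod.ext_iff]), Finset.sum_singleton,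
    Finset.card_insert_of_notMem (by norm_num [Prod.ext_iff]), Finset.card_singleton]
  norm_num [coord19]

lemma LN_01_1 : LN19 {1} ((0:ℝ),(1:ℝ)) = 0 := by
  have h : supp19.filter (fun y => y.2 = (1:ℝ)) = {((0:ℝ),(1:ℝ))} := by
    rw [supp19]
    rw [Finset.filter_insert, Finset.filter_insert, Finset.filter_singleton]
    norm_num
  rw [LN19, compl1]
  rw [Finset.sum_singleton, condMean19, filt1]
  simp only [h]
  rw [Finset.sum_singleton, Finset.card_singleton]
  norm_num [coord19]

lemma LN_10_0 : LN19 {0} ((1:ℝ),(0:ℝ)) = 0 := by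
  have h : supp19.filter (fun y => y.1 = (1:ℝ)) = {((1:ℝ),(0:ℝ))} := by
    rw [supp19]
    rw [Finset.filter_insert, Finset.filter_insert, Finset.filter_singleton]
    norm_num
  rw [LN19, compl0]
  rw [Finset.sum_singleton, condMean19, filt0]
  simp only [h]
  rw [Finset.sum_singleton, Finset.card_singleton]
  norm_num [coord19]

lemma LN_00_E : LN19 ∅ ((0:ℝ),(0:ℝ)) = 2/9 := by
  have hs : ∑ y ∈ supp19, coord19 0 y = 1 ∧ ∑ y ∈ supp19, coord19 1 y = 1 := by
    constructor <;>
    · rw [supp19, Finset.sum_insert (by norm_num [Prod.ext_iff]),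
        Finset.sum_insert (by norm_num [Prod.ext_iff]), Finset.sum_singleton]
      norm_num [coord19]
  have hc : (supp19.card : ℝ) = 3 := by
    rw [supp19, Finset.card_insert_of_notMem (by norm_num [Prod.ext_iff]),
      Finset.card_insert_of_notMem (by norm_num [Prod.ext_iff]), Finset.card_singleton]
    norm_num
  rw [LN19, complE]
  rw [Finset.sum_insert (by decide), Finset.sum_singleton]
  rw [condMean19, condMean19, filtE, hs.1, hs.2, hc]
  norm_num [coord19]

lemma dev00 : devPol19 ((0:ℝ),(0:ℝ)) = {0} := by norm_num [devPol19]
lemma dev01 : devPol19 ((0:ℝ),(1:ℝ)) = {1} := by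
  rw [devPol19, if_pos]
  norm_num [abs_of_nonneg, abs_of_nonpos]
lemma dev10 : devPol19 ((1:ℝ),(0:ℝ)) = {0} := by
  rw [devPol19, if_neg]
  norm_num [abs_of_nonneg, abs_of_nonpos]

lemma gr00 : greedyPol19 ((0:ℝ),(0:ℝ)) = ∅ := by norm_num [greedyPol19]
lemma gr01 : greedyPol19 ((0:ℝ),(1:ℝ)) = {1} := by norm_num [greedyPol19, Prod.ext_iff]
lemma gr10 : greedyPol19 ((1:ℝ),(0:ℝ)) = {0} := by norm_num [greedyPol19, Prod.ext_iff]

lemma RN_expand (pol : ℝ × ℝ → Finset (Fin 2)) :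
    RN19 pol = (1/3) * (LN19 (pol ((0:ℝ),(0:ℝ))) ((0:ℝ),(0:ℝ)) +
      LN19 (pol ((0:ℝ),(1:ℝ))) ((0:ℝ),(1:ℝ)) + LN19 (pol ((1:ℝ),(0:ℝ))) ((1:ℝ),(0:ℝ))) := by
  rw [RN19, supp19, Finset.sum_insert (by norm_num [Prod.ext_iff]),
    Finset.sum_insert (by norm_num [Prod.ext_iff]), Finset.sum_singleton]
  ring

theorem stmt_19 :
    RN19 devPol19 = 1 / 12 ∧
    RN19 greedyPol19 = 2 / 27 ∧
    (2 : ℝ) / 27 < 1 / 12 := by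
  refine ⟨?_, ?_, by norm_num⟩
  · rw [RN_expand, dev00, dev01, dev10, LN_00_0, LN_01_1, LN_10_0]; norm_num
  · rw [RN_expand, gr00, gr01, gr10, LN_00_E, LN_01_1, LN_10_0]; norm_num

end
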